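/- Let α be a real quadratic irrational and β an irrational real number. Suppose there exists m ∈ ℕ such that for every natural number n with n ≥ m and n ≥ 1 there exist integers i, j, k, l with |i·l − j·k| = 1 and (i·(n·α) + j)/(k·(n·α) + l) = n·β. Then for every natural number n ≥ 1 there exist integers i, j, k, l with |i·l − j·k| = 1 and (i·(n·α) + j)/(k·(n·α) + l) = n·β; that is, n·α and n·β are PGL₂(ℤ)-equivalent for all n ≥ 1. -/

import Mathlib

/-- Two irrational reals are `PGL₂(ℤ)`-equivalent when related by an integral
fractional linear transformation of determinant `±1`. -/
def PGL2ZEquiv (x y : ℝ) : Prop :=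
  ∃ i j k l : ℤ, |i * l - j * k| = 1 ∧
    ((i : ℝ) * x + (j : ℝ)) / ((k : ℝ) * x + (l : ℝ)) = y

lemma irr_lin {α : ℝ} (hα : Irrational α) {c d : ℤ}
    (h : (c : ℝ) * α + (d : ℝ) = 0) : c = 0 ∧ d = 0 := by
  have hc : c = 0 := by
    by_contra hc
    apply hα
    refine ⟨(-d : ℚ) / (c : ℚ), ?_⟩
    have hc' : (c : ℝ) ≠ 0 := Int.cast_ne_zero.mpr hc
    push_cast
    field_simp
    linarith
  refine ⟨hc, ?_⟩
  have : (d : ℝ) = 0 := by rw [hc] at h; simpa using h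
  exact_mod_cast this

lemma core {α β : ℝ} (hα : Irrational α) (hβ : Irrational β)
    (s t : ℕ) (hs : s ≠ 0) (ht : t ≠ 0) (u v : ℤ)
    (huv : u * (s : ℤ) + v * (t : ℤ) = 1) (P Q P' Q' : ℤ)
    (hPQ : (s : ℝ) * (t : ℝ) * α ^ 2 = (P : ℝ) * α + (Q : ℝ))
    (hP'Q' : (s : ℝ) * (t : ℝ) * β ^ 2 = (P' : ℝ) * β + (Q' : ℝ))
    (h1 : PGL2ZEquiv ((s : ℝ) * α) ((s : ℝ) * β))
    (h2 : PGL2ZEquiv ((t : ℝ) * α) ((t : ℝ) * β)) :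
    PGL2ZEquiv α β := by
  obtain ⟨i, j, k, l, hd1, he1⟩ := h1
  obtain ⟨i2, j2, k2, l2, hd2, he2⟩ := h2
  have hsβ : Irrational ((s : ℝ) * β) := hβ.natCast_mul hs
  have htβ : Irrational ((t : ℝ) * β) := hβ.natCast_mul ht
  have hden1 : (k : ℝ) * ((s : ℝ) * α) + (l : ℝ) ≠ 0 := by
    intro h0; rw [h0, div_zero] at he1; exact hsβ.ne_zero he1.symm
  have hden2 : (k2 : ℝ) * ((t : ℝ) * α) + (l2 : ℝ) ≠ 0 := by
    intro h0; rw [h0, div_zero] at he2; exact htβ.ne_zero he2.symm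
  have E1 : (i : ℝ) * ((s : ℝ) * α) + (j : ℝ)
      = ((s : ℝ) * β) * ((k : ℝ) * ((s : ℝ) * α) + (l : ℝ)) := (div_eq_iff hden1).mp he1
  have E2 : (i2 : ℝ) * ((t : ℝ) * α) + (j2 : ℝ)
      = ((t : ℝ) * β) * ((k2 : ℝ) * ((t : ℝ) * α) + (l2 : ℝ)) := (div_eq_iff hden2).mp he2
  have hEZ : (i * l - j * k) * (i * l - j * k) = 1 := by
    rcases (abs_eq (by norm_num : (0:ℤ) ≤ 1)).mp hd1 with h | h <;> rw [h] <;> norm_num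
  have hE2Z : (i2 * l2 - j2 * k2) * (i2 * l2 - j2 * k2) = 1 := by
    rcases (abs_eq (by norm_num : (0:ℤ) ≤ 1)).mp hd2 with h | h <;> rw [h] <;> norm_num
  have hE : ((i : ℝ) * l - j * k) * ((i : ℝ) * l - j * k) = 1 := by exact_mod_cast hEZ
  have hE2 : ((i2 : ℝ) * l2 - j2 * k2) * ((i2 : ℝ) * l2 - j2 * k2) = 1 := by exact_mod_cast hE2Z
  have hUVR : (u : ℝ) * s + v * t = 1 := by exact_mod_cast huv
  -- small identities
  have m1 : ((k : ℝ) * ((s : ℝ) * α) + l) * ((i : ℝ) - (k : ℝ) * ((s : ℝ) * β))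
      = (i : ℝ) * l - j * k := by linear_combination (k : ℝ) * E1
  have m4 : ((k : ℝ) * ((s : ℝ) * α) + l) * ((l : ℝ) * ((s : ℝ) * β) - j)
      = ((i : ℝ) * l - j * k) * ((s : ℝ) * α) := by linear_combination (-(l : ℝ)) * E1
  have m2 : ((k2 : ℝ) * ((t : ℝ) * α) + l2) * ((i2 : ℝ) - (k2 : ℝ) * ((t : ℝ) * β))
      = (i2 : ℝ) * l2 - j2 * k2 := by linear_combination (k2 : ℝ) * E2
  have m5 : ((k2 : ℝ) * ((t : ℝ) * α) + l2) * ((l2 : ℝ) * ((t : ℝ) * β) - j2)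
      = ((i2 : ℝ) * l2 - j2 * k2) * ((t : ℝ) * α) := by linear_combination (-(l2 : ℝ)) * E2
  -- integer data
  obtain ⟨K0, hK0⟩ : ∃ z : ℤ, z = k * k2 * P + k * (s : ℤ) * l2 + l * k2 * (t : ℤ) := ⟨_, rfl⟩
  obtain ⟨L0, hL0⟩ : ∃ z : ℤ, z = k * k2 * Q + l * l2 := ⟨_, rfl⟩
  obtain ⟨I0, hI0⟩ : ∃ z : ℤ, z = u * (i * k2 * P + i * (s : ℤ) * l2 + j * k2 * (t : ℤ))
      + v * (k * i2 * P + k * (s : ℤ) * j2 + l * i2 * (t : ℤ)) := ⟨_, rfl⟩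
  obtain ⟨J0, hJ0⟩ : ∃ z : ℤ, z = u * (i * k2 * Q + j * l2) + v * (k * i2 * Q + l * j2) := ⟨_, rfl⟩
  have R1 : (K0 : ℝ) * α + (L0 : ℝ)
      = ((k : ℝ) * ((s : ℝ) * α) + l) * ((k2 : ℝ) * ((t : ℝ) * α) + l2) := by
    rw [hK0, hL0]; push_cast
    linear_combination (-((k : ℝ) * k2)) * hPQ
  have R2 : (I0 : ℝ) * α + (J0 : ℝ)
      = (((k : ℝ) * ((s : ℝ) * α) + l) * ((k2 : ℝ) * ((t : ℝ) * α) + l2)) * β := by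
    rw [hI0, hJ0]; push_cast
    linear_combination ((u : ℝ) * ((k2 : ℝ) * ((t : ℝ) * α) + l2)) * E1
      + ((v : ℝ) * ((k : ℝ) * ((s : ℝ) * α) + l)) * E2
      + ((((k : ℝ) * ((s : ℝ) * α) + l) * ((k2 : ℝ) * ((t : ℝ) * α) + l2)) * β) * hUVR
      + (-((u : ℝ) * i * k2 + (v : ℝ) * k * i2)) * hPQ
  have m3 : ((i : ℝ) * l - j * k) * ((i2 : ℝ) * l2 - j2 * k2)
      = (((k : ℝ) * ((s : ℝ) * α) + l) * ((k2 : ℝ) * ((t : ℝ) * α) + l2))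
          * ((i : ℝ) * i2 + (k : ℝ) * k2 * Q')
        + ((k : ℝ) * k2 * P' - (i : ℝ) * k2 * t - (i2 : ℝ) * k * s)
          * ((((k : ℝ) * ((s : ℝ) * α) + l) * ((k2 : ℝ) * ((t : ℝ) * α) + l2)) * β) := by
    linear_combination
      (-(((k2 : ℝ) * ((t : ℝ) * α) + l2) * ((i2 : ℝ) - (k2 : ℝ) * ((t : ℝ) * β)))) * m1
      + (-((i : ℝ) * l - j * k)) * m2
      + ((((k : ℝ) * ((s : ℝ) * α) + l) * ((k2 : ℝ) * ((t : ℝ) * α) + l2)) * (k : ℝ) * k2) * hP'Q'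
  have F3 : (((i : ℝ) * l - j * k) * ((i2 : ℝ) * l2 - j2 * k2) * ((i : ℝ) * i2 + (k : ℝ) * k2 * Q'))
        * (((k : ℝ) * ((s : ℝ) * α) + l) * ((k2 : ℝ) * ((t : ℝ) * α) + l2))
      + (((i : ℝ) * l - j * k) * ((i2 : ℝ) * l2 - j2 * k2)
          * ((k : ℝ) * k2 * P' - (i : ℝ) * k2 * t - (i2 : ℝ) * k * s))
        * ((((k : ℝ) * ((s : ℝ) * α) + l) * ((k2 : ℝ) * ((t : ℝ) * α) + l2)) * β) = 1 := by
    linear_combination (-(((i : ℝ) * l - j * k) * ((i2 : ℝ) * l2 - j2 * k2))) * m3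
      + (((i2 : ℝ) * l2 - j2 * k2) * ((i2 : ℝ) * l2 - j2 * k2)) * hE + hE2
  have m6 : (((k : ℝ) * ((s : ℝ) * α) + l) * ((k2 : ℝ) * ((t : ℝ) * α) + l2))
        * ((u : ℝ) * (-((l : ℝ) * k2 * Q') - (j : ℝ) * i2) + (v : ℝ) * (-((k : ℝ) * l2 * Q') - (i : ℝ) * j2))
      + ((u : ℝ) * (-((l : ℝ) * k2 * P') + (l : ℝ) * i2 * s + (j : ℝ) * k2 * t)
          + (v : ℝ) * (-((k : ℝ) * l2 * P') + (i : ℝ) * l2 * t + (k : ℝ) * j2 * s))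
        * ((((k : ℝ) * ((s : ℝ) * α) + l) * ((k2 : ℝ) * ((t : ℝ) * α) + l2)) * β)
      = ((i : ℝ) * l - j * k) * ((i2 : ℝ) * l2 - j2 * k2) * α := by
    linear_combination
      ((u : ℝ) * (((k2 : ℝ) * ((t : ℝ) * α) + l2) * ((i2 : ℝ) - (k2 : ℝ) * ((t : ℝ) * β)))) * m4
      + ((u : ℝ) * ((i : ℝ) * l - j * k) * (s : ℝ) * α) * m2
      + ((v : ℝ) * (((k2 : ℝ) * ((t : ℝ) * α) + l2) * ((l2 : ℝ) * ((t : ℝ) * β) - j2))) * m1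
      + ((v : ℝ) * ((i : ℝ) * l - j * k)) * m5
      + (((i : ℝ) * l - j * k) * ((i2 : ℝ) * l2 - j2 * k2) * α) * hUVR
      + ((((k : ℝ) * ((s : ℝ) * α) + l) * ((k2 : ℝ) * ((t : ℝ) * α) + l2))
          * ((u : ℝ) * l * k2 + (v : ℝ) * k * l2)) * hP'Q'
  have F4 : (((i : ℝ) * l - j * k) * ((i2 : ℝ) * l2 - j2 * k2)
        * ((u : ℝ) * (-((l : ℝ) * k2 * Q') - (j : ℝ) * i2) + (v : ℝ) * (-((k : ℝ) * l2 * Q') - (i : ℝ) * j2)))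
        * (((k : ℝ) * ((s : ℝ) * α) + l) * ((k2 : ℝ) * ((t : ℝ) * α) + l2))
      + (((i : ℝ) * l - j * k) * ((i2 : ℝ) * l2 - j2 * k2)
          * ((u : ℝ) * (-((l : ℝ) * k2 * P') + (l : ℝ) * i2 * s + (j : ℝ) * k2 * t)
            + (v : ℝ) * (-((k : ℝ) * l2 * P') + (i : ℝ) * l2 * t + (k : ℝ) * j2 * s)))
        * ((((k : ℝ) * ((s : ℝ) * α) + l) * ((k2 : ℝ) * ((t : ℝ) * α) + l2)) * β) = α := by
    linear_combination (((i : ℝ) * l - j * k) * ((i2 : ℝ) * l2 - j2 * k2)) * m6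
      + (((i2 : ℝ) * l2 - j2 * k2) * ((i2 : ℝ) * l2 - j2 * k2) * α) * hE + α * hE2
  -- integer versions of the coefficients
  obtain ⟨x1, hx1⟩ : ∃ z : ℤ, z = (i * l - j * k) * (i2 * l2 - j2 * k2) * (i * i2 + k * k2 * Q') := ⟨_, rfl⟩
  obtain ⟨y1, hy1⟩ : ∃ z : ℤ, z = (i * l - j * k) * (i2 * l2 - j2 * k2)
      * (k * k2 * P' - i * k2 * (t : ℤ) - i2 * k * (s : ℤ)) := ⟨_, rfl⟩
  obtain ⟨x2, hx2⟩ : ∃ z : ℤ, z = (i * l - j * k) * (i2 * l2 - j2 * k2)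
      * (u * (-(l * k2 * Q') - j * i2) + v * (-(k * l2 * Q') - i * j2)) := ⟨_, rfl⟩
  obtain ⟨y2, hy2⟩ : ∃ z : ℤ, z = (i * l - j * k) * (i2 * l2 - j2 * k2)
      * (u * (-(l * k2 * P') + l * i2 * (s : ℤ) + j * k2 * (t : ℤ))
        + v * (-(k * l2 * P') + i * l2 * (t : ℤ) + k * j2 * (s : ℤ))) := ⟨_, rfl⟩
  have h3 : ((x1 * K0 + y1 * I0 : ℤ) : ℝ) * α + ((x1 * L0 + y1 * J0 - 1 : ℤ) : ℝ) = 0 := by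
    have F3' := F3
    rw [← R2, ← R1] at F3'
    push_cast
    rw [hx1, hy1]
    push_cast
    linear_combination F3'
  have h4 : ((x2 * K0 + y2 * I0 - 1 : ℤ) : ℝ) * α + ((x2 * L0 + y2 * J0 : ℤ) : ℝ) = 0 := by
    have F4' := F4
    rw [← R2, ← R1] at F4'
    push_cast
    rw [hx2, hy2]
    push_cast
    linear_combination F4'
  obtain ⟨eq1, eq2⟩ := irr_lin hα h3
  obtain ⟨eq3, eq4⟩ := irr_lin hα h4
  have hdet : (I0 * L0 - J0 * K0) * (y2 * x1 - x2 * y1) = 1 := by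
    linear_combination (x1 * L0 + y1 * J0) * eq3 + eq2 - (x2 * L0 + y2 * J0) * eq1
  have habs : |I0 * L0 - J0 * K0| = 1 := by
    rcases Int.isUnit_iff.mp (IsUnit.of_mul_eq_one _ hdet) with h | h <;> rw [h] <;> norm_num
  have hden : (K0 : ℝ) * α + (L0 : ℝ) ≠ 0 := by
    rw [R1]; exact mul_ne_zero hden1 hden2
  refine ⟨I0, J0, K0, L0, habs, ?_⟩
  rw [div_eq_iff hden]
  linear_combination R2 - β * R1

lemma irr_linQ {α : ℝ} (hα : Irrational α) {c d : ℚ}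
    (h : (c : ℝ) * α + (d : ℝ) = 0) : c = 0 ∧ d = 0 := by
  have hc : c = 0 := by
    by_contra hc
    apply hα
    refine ⟨(-d) / c, ?_⟩
    have hc' : (c : ℝ) ≠ 0 := Rat.cast_ne_zero.mpr hc
    push_cast
    field_simp
    linarith
  refine ⟨hc, ?_⟩
  have : (d : ℝ) = 0 := by rw [hc] at h; simpa using h
  exact_mod_cast this

lemma int_of_den_dvd (x : ℚ) (c : ℕ) (h : x.den ∣ c) : ∃ z : ℤ, (z : ℚ) = (c : ℚ) * x := by
  obtain ⟨e, he⟩ := h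
  refine ⟨(e : ℤ) * x.num, ?_⟩
  have hd : (x.den : ℚ) ≠ 0 := by
    exact_mod_cast x.den_nz
  have key := Rat.num_div_den x
  rw [div_eq_iff hd] at key
  rw [he]
  push_cast
  linear_combination (e : ℚ) * key

/-- If a quadratic irrational `α` and an irrational `β` are eventually
`PGL₂(ℤ)`-equivalent, then `n·α` and `n·β` are `PGL₂(ℤ)`-equivalent for all
`n ≥ 1`. -/
theorem stmt_6 (α β : ℝ) (hα : Irrational α)
    (hquad : ∃ a b c : ℚ, ¬(a = 0 ∧ b = 0 ∧ c = 0) ∧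
      (a : ℝ) * α ^ 2 + (b : ℝ) * α + (c : ℝ) = 0)
    (hβ : Irrational β)
    (hev : ∃ m : ℕ, ∀ n : ℕ, m ≤ n → 1 ≤ n →
      PGL2ZEquiv ((n : ℝ) * α) ((n : ℝ) * β)) :
    ∀ n : ℕ, 1 ≤ n → PGL2ZEquiv ((n : ℝ) * α) ((n : ℝ) * β) := by
  obtain ⟨m, hm⟩ := hev
  obtain ⟨a, b, c, h0, habc⟩ := hquad
  have ha : a ≠ 0 := by
    intro haz
    rw [haz] at habc
    push_cast at habc
    have hbc := irr_linQ hα (by linarith : (b : ℝ) * α + (c : ℝ) = 0)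
    exact h0 ⟨haz, hbc.1, hbc.2⟩
  have haR : (a : ℝ) ≠ 0 := Rat.cast_ne_zero.mpr ha
  obtain ⟨p, hp⟩ : ∃ z : ℚ, z = -b / a := ⟨_, rfl⟩
  obtain ⟨q, hq⟩ : ∃ z : ℚ, z = -c / a := ⟨_, rfl⟩
  have hpq : α ^ 2 = (p : ℝ) * α + (q : ℝ) := by
    rw [hp, hq]
    push_cast
    rw [div_mul_eq_mul_div, ← add_div, eq_div_iff haR]
    linear_combination habc
  -- β is quadratic over ℚ(α)
  obtain ⟨M, hM⟩ : ∃ z : ℕ, z = m + 1 := ⟨_, rfl⟩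
  have hM1 : m ≤ M := by omega
  have hM2 : 1 ≤ M := by omega
  have hMne : M ≠ 0 := by omega
  have hm1 := hm M hM1 hM2
  obtain ⟨i, j, k, l, hd1, he1⟩ := hm1
  have hNβ : Irrational ((M : ℝ) * β) := hβ.natCast_mul hMne
  have hden1 : (k : ℝ) * ((M : ℝ) * α) + (l : ℝ) ≠ 0 := by
    intro h0'; rw [h0', div_zero] at he1; exact hNβ.ne_zero he1.symm
  have E : (i : ℝ) * ((M : ℝ) * α) + (j : ℝ)
      = ((M : ℝ) * β) * ((k : ℝ) * ((M : ℝ) * α) + (l : ℝ)) :=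
    (div_eq_iff hden1).mp he1
  have hN0 : (M : ℝ) ≠ 0 := Nat.cast_ne_zero.mpr hMne
  obtain ⟨n1, hn1⟩ : ∃ z : ℚ, z = (M : ℚ) := ⟨_, rfl⟩
  have hn1R : ((n1 : ℚ) : ℝ) = (M : ℝ) := by rw [hn1]; push_cast; ring
  obtain ⟨Nr, hNr⟩ : ∃ z : ℚ, z = (l : ℚ) ^ 2 + p * ((k : ℚ) * n1) * (l : ℚ)
      - q * ((k : ℚ) * n1) ^ 2 := ⟨_, rfl⟩
  have hNrR : (Nr : ℝ) = ((k : ℝ) * ((M : ℝ) * α) + (l : ℝ))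
      * ((k : ℝ) * (M : ℝ) * (p : ℝ) + (l : ℝ) - (k : ℝ) * ((M : ℝ) * α)) := by
    rw [hNr, hn1]
    push_cast
    linear_combination (((k : ℝ) * (M : ℝ)) ^ 2) * hpq
  have hμ : (k : ℝ) * (M : ℝ) * (p : ℝ) + (l : ℝ)
      - (k : ℝ) * ((M : ℝ) * α) ≠ 0 := by
    rcases eq_or_ne k 0 with hk | hk
    · intro h0'
      rw [hk] at h0' hden1
      push_cast at h0' hden1
      apply hden1
      linarith
    · intro h0'
      apply hα
      refine ⟨((k : ℚ) * n1 * p + (l : ℚ)) / ((k : ℚ) * n1), ?_⟩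
      have hkR : (k : ℝ) * (M : ℝ) ≠ 0 :=
        mul_ne_zero (Int.cast_ne_zero.mpr hk) hN0
      rw [hn1]
      push_cast
      rw [div_eq_iff (by push_cast at hkR ⊢; convert hkR using 2 <;> push_cast <;> ring)]
      push_cast at h0'
      linarith
  have hNr0R : (Nr : ℝ) ≠ 0 := by rw [hNrR]; exact mul_ne_zero hden1 hμ
  have hNr0 : Nr ≠ 0 := fun h' => hNr0R (by rw [h']; norm_num)
  obtain ⟨Cq, hCq⟩ : ∃ z : ℚ, z = (j : ℚ) * ((k : ℚ) * n1) * p + (j : ℚ) * (l : ℚ)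
      - (i : ℚ) * n1 * ((k : ℚ) * n1) * q := ⟨_, rfl⟩
  have key : β * ((M : ℝ) * (Nr : ℝ))
      = ((i * l - j * k : ℤ) : ℝ) * (M : ℝ) * α + (Cq : ℝ) := by
    rw [hNr, hCq, hn1]
    push_cast
    linear_combination
      (-((k : ℝ) * (M : ℝ) * (p : ℝ) + (l : ℝ) - (k : ℝ) * ((M : ℝ) * α))) * E
      + (β * (M : ℝ) * ((k : ℝ) * (M : ℝ)) ^ 2
          - (i : ℝ) * (k : ℝ) * (M : ℝ) ^ 2) * hpq
  obtain ⟨a0, ha0⟩ : ∃ z : ℚ, z = ((i * l - j * k : ℤ) : ℚ) / Nr := ⟨_, rfl⟩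
  obtain ⟨b0, hb0⟩ : ∃ z : ℚ, z = Cq / (n1 * Nr) := ⟨_, rfl⟩
  have hβab : β = (a0 : ℝ) * α + (b0 : ℝ) := by
    have hcan : ((M : ℝ) * (Nr : ℝ)) ≠ 0 := mul_ne_zero hN0 hNr0R
    apply mul_right_cancel₀ hcan
    rw [key, ha0, hb0, hn1]
    push_cast
    have hNrR0 : ((Nr : ℚ) : ℝ) ≠ 0 := hNr0R
    field_simp
  obtain ⟨p', hp'⟩ : ∃ z : ℚ, z = a0 * p + 2 * b0 := ⟨_, rfl⟩
  obtain ⟨q', hq'⟩ : ∃ z : ℚ, z = a0 ^ 2 * q - a0 * b0 * p - b0 ^ 2 := ⟨_, rfl⟩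
  have hp'q' : β ^ 2 = (p' : ℝ) * β + (q' : ℝ) := by
    rw [hp', hq']
    push_cast
    linear_combination (β + (a0 : ℝ) * α + (b0 : ℝ) - ((a0 : ℝ) * (p : ℝ) + 2 * (b0 : ℝ))) * hβab
      + ((a0 : ℝ) ^ 2) * hpq
  intro n hn
  have hn0 : n ≠ 0 := by omega
  obtain ⟨d, hdd⟩ : ∃ z : ℕ, z = p.den * q.den * (p'.den * q'.den) := ⟨_, rfl⟩
  have hd0 : d ≠ 0 := by
    rw [hdd]
    exact Nat.mul_ne_zero (Nat.mul_ne_zero p.den_nz q.den_nz)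
      (Nat.mul_ne_zero p'.den_nz q'.den_nz)
  obtain ⟨s, hs⟩ : ∃ z : ℕ, z = d * (m + 1) := ⟨_, rfl⟩
  obtain ⟨t, htt⟩ : ∃ z : ℕ, z = s + 1 := ⟨_, rfl⟩
  have hs0 : s ≠ 0 := by rw [hs]; exact Nat.mul_ne_zero hd0 (by omega)
  have ht0 : t ≠ 0 := by omega
  have hms : m + 1 ≤ s := by
    rw [hs]
    calc m + 1 = 1 * (m + 1) := by ring
    _ ≤ d * (m + 1) := Nat.mul_le_mul_right _ (by omega)
  have hsn : s ≤ s * n := Nat.le_mul_of_pos_right s (by omega)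
  have htn : t ≤ t * n := Nat.le_mul_of_pos_right t (by omega)
  have h1 := hm (s * n) (by omega) (by omega)
  have h2 := hm (t * n) (by omega) (by omega)
  have hc1 : ((s * n : ℕ) : ℝ) = (s : ℝ) * (n : ℝ) := by push_cast; ring
  have hc2 : ((t * n : ℕ) : ℝ) = (t : ℝ) * (n : ℝ) := by push_cast; ring
  rw [hc1, mul_assoc, mul_assoc] at h1
  rw [hc2, mul_assoc, mul_assoc] at h2
  have hpd : p.den ∣ s * t * n := by
    rw [hs, hdd]
    exact ⟨q.den * (p'.den * q'.den) * ((m + 1) * (t * n)), by ring⟩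
  have hqd : q.den ∣ s * t * (n * n) := by
    rw [hs, hdd]
    exact ⟨p.den * (p'.den * q'.den) * ((m + 1) * (t * (n * n))), by ring⟩
  have hpd' : p'.den ∣ s * t * n := by
    rw [hs, hdd]
    exact ⟨p.den * q.den * q'.den * ((m + 1) * (t * n)), by ring⟩
  have hqd' : q'.den ∣ s * t * (n * n) := by
    rw [hs, hdd]
    exact ⟨p.den * q.den * p'.den * ((m + 1) * (t * (n * n))), by ring⟩
  obtain ⟨PZ, hPZ⟩ := int_of_den_dvd p (s * t * n) hpd
  obtain ⟨QZ, hQZ⟩ := int_of_den_dvd q (s * t * (n * n)) hqd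
  obtain ⟨PZ', hPZ'⟩ := int_of_den_dvd p' (s * t * n) hpd'
  obtain ⟨QZ', hQZ'⟩ := int_of_den_dvd q' (s * t * (n * n)) hqd'
  have hPZR : (PZ : ℝ) = (s : ℝ) * (t : ℝ) * (n : ℝ) * (p : ℝ) := by exact_mod_cast hPZ
  have hQZR : (QZ : ℝ) = (s : ℝ) * (t : ℝ) * ((n : ℝ) * (n : ℝ)) * (q : ℝ) := by
    exact_mod_cast hQZ
  have hPZR' : (PZ' : ℝ) = (s : ℝ) * (t : ℝ) * (n : ℝ) * (p' : ℝ) := by exact_mod_cast hPZ'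
  have hQZR' : (QZ' : ℝ) = (s : ℝ) * (t : ℝ) * ((n : ℝ) * (n : ℝ)) * (q' : ℝ) := by
    exact_mod_cast hQZ'
  have hPQc : (s : ℝ) * (t : ℝ) * ((n : ℝ) * α) ^ 2 = (PZ : ℝ) * ((n : ℝ) * α) + (QZ : ℝ) := by
    linear_combination ((s : ℝ) * (t : ℝ) * (n : ℝ) ^ 2) * hpq + (-((n : ℝ) * α)) * hPZR
      + (-1 : ℝ) * hQZR
  have hP'Q'c : (s : ℝ) * (t : ℝ) * ((n : ℝ) * β) ^ 2 = (PZ' : ℝ) * ((n : ℝ) * β) + (QZ' : ℝ) := by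
    linear_combination ((s : ℝ) * (t : ℝ) * (n : ℝ) ^ 2) * hp'q' + (-((n : ℝ) * β)) * hPZR'
      + (-1 : ℝ) * hQZR'
  have huv : (-1 : ℤ) * (s : ℤ) + 1 * (t : ℤ) = 1 := by omega
  exact core (hα.natCast_mul hn0) (hβ.natCast_mul hn0) s t hs0 ht0 (-1) 1 huv PZ QZ PZ' QZ'
    hPQc hP'Q'c h1 h2
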